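/- Let M = ⊕_{i∈I} T_i be a right S-semimodule that is a direct sum of minimal subsemimodules T_i, and let K ⊆ M be a strong subsemimodule (m + m' ∈ K implies m, m' ∈ K). Then there exists a subset I_K ⊆ I such that M = K ⊕ (⊕_{i∈I_K} T_i) and K ≅ ⊕_{i∈I∖I_K} T_i. -/

import Mathlib

open DirectSum

/-- If `M = ⊕_{i ∈ ι} T i` is a direct sum of minimal subsemimodules and `K` is a
strong subsemimodule of `M`, then there is a subset `J ⊆ ι` with
`M = K ⊕ (⊕_{i ∈ J} T i)` and `K ≅ ⊕_{i ∈ ιᶜJ} T i`. -/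
theorem strong_submodule_complement (S M ι : Type) [Semiring S] [AddCommMonoid M]
    [Module S M] [DecidableEq ι] (T : ι → Submodule S M)
    (hmin : ∀ i, T i ≠ ⊥ ∧ ∀ N : Submodule S M, N ≤ T i → N = ⊥ ∨ N = T i)
    (hint : DirectSum.IsInternal T)
    (K : Submodule S M) (hK : ∀ m m' : M, m + m' ∈ K → m ∈ K ∧ m' ∈ K) :
    ∃ J : Set ι,
      (Function.Bijective fun ab : K × ↥(⨆ i ∈ J, T i) => (ab.1 : M) + (ab.2 : M)) ∧
      Nonempty (K ≃ₗ[S] ⨁ i : ↥(Jᶜ), T i.1) := by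
  classical
  set e : (⨁ i, T i) ≃ₗ[S] M := LinearEquiv.ofBijective (DirectSum.coeLinearMap T) hint with he
  set D : M →ₗ[S] ⨁ i, T i := (e.symm : M →ₗ[S] ⨁ i, T i) with hD
  -- strong for finite sums
  have hsum : ∀ (s : Finset ι) (g : ι → M), (∑ i ∈ s, g i) ∈ K → ∀ i ∈ s, g i ∈ K := by
    intro s
    induction s using Finset.induction_on with
    | empty => intro g _ i hi; simp at hi
    | insert a s ha ih =>
      intro g hg i hi
      rw [Finset.sum_insert ha] at hg
      obtain ⟨h1, h2⟩ := hK _ _ hg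
      rcases Finset.mem_insert.mp hi with rfl | hi
      · exact h1
      · exact ih g h2 i hi
  -- decomposition of any m
  have hrecover : ∀ m : M, m = ∑ i ∈ (D m).support, ((D m) i : M) := by
    intro m
    conv_lhs => rw [← e.apply_symm_apply m]
    rw [show e.symm m = D m from rfl]
    conv_lhs => rw [← DirectSum.sum_support_of (D m)]
    rw [map_sum]
    refine Finset.sum_congr rfl fun i _ => ?_
    exact DirectSum.coeLinearMap_of T i _
  -- support vanishing lemma
  have hsupp : ∀ (s : Set ι) (a : M), a ∈ (⨆ i ∈ s, T i) → ∀ i ∉ s, (D a) i = 0 := by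
    intro s a ha i hi
    set P : Submodule S M :=
      { carrier := {a : M | (D a) i = 0}
        add_mem' := fun {x y} hx hy => by
          simp only [Set.mem_setOf_eq, map_add, DirectSum.add_apply] at *
          rw [hx, hy, add_zero]
        zero_mem' := by simp [Set.mem_setOf_eq]
        smul_mem' := fun c {x} hx => by
          simp only [Set.mem_setOf_eq, map_smul] at *
          rw [DirectSum.smul_apply, hx, smul_zero] } with hP
    have hle : (⨆ j ∈ s, T j) ≤ P := by
      refine iSup₂_le fun j hj x hx => ?_
      have : (D x) i = 0 := by
        have := hint.ofBijective_coeLinearMap_of_mem_ne (i := j) (j := i)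
          (fun h => hi (h ▸ hj)) hx
        exact this
      exact this
    exact hle ha
  -- the index set
  set J : Set ι := {i : ι | ¬ T i ≤ K} with hJ
  have hJc : ∀ i, i ∈ Jᶜ ↔ T i ≤ K := by
    intro i; simp [hJ]
  -- K = ⨆ i ∈ Jᶜ, T i
  have hKeq : K = ⨆ i ∈ Jᶜ, T i := by
    apply le_antisymm
    · intro m hm
      rw [hrecover m]
      apply Submodule.sum_mem
      intro i _
      have hmemK : ((D m) i : M) ∈ K := by
        have := hsum (D m).support (fun j => ((D m) j : M)) (by rw [← hrecover m]; exact hm)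
        by_cases hi : i ∈ (D m).support
        · exact this i hi
        · rw [DFinsupp.notMem_support_iff.mp hi]; exact K.zero_mem
      by_cases hTK : T i ≤ K
      · exact Submodule.mem_iSup_of_mem i (Submodule.mem_iSup_of_mem ((hJc i).mpr hTK)
          ((D m) i).2)
      · -- then K ⊓ T i = ⊥, so component is 0
        have hbot : K ⊓ T i = ⊥ := by
          rcases (hmin i).2 (K ⊓ T i) inf_le_right with h | h
          · exact h
          · exact absurd (h ▸ inf_le_left) hTK
        have : ((D m) i : M) ∈ K ⊓ T i := ⟨hmemK, ((D m) i).2⟩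
        rw [hbot, Submodule.mem_bot] at this
        rw [this]; exact Submodule.zero_mem _
    · exact iSup₂_le fun i hi => (hJc i).mp hi
  refine ⟨J, ?_, ?_⟩
  · constructor
    · -- injectivity
      rintro ⟨a, b⟩ ⟨a', b'⟩ hab
      simp only at hab
      have hD : D (a : M) + D (b : M) = D (a' : M) + D (b' : M) := by
        rw [← map_add, ← map_add, hab]
      have haJ : ∀ i ∈ J, (D (a : M)) i = 0 := fun i hi =>
        hsupp Jᶜ a (hKeq ▸ a.2) i (by simpa using hi)
      have haJ' : ∀ i ∈ J, (D (a' : M)) i = 0 := fun i hi =>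
        hsupp Jᶜ a' (hKeq ▸ a'.2) i (by simpa using hi)
      have hbJ : ∀ i ∉ J, (D (b : M)) i = 0 := fun i hi => hsupp J b b.2 i hi
      have hbJ' : ∀ i ∉ J, (D (b' : M)) i = 0 := fun i hi => hsupp J b' b'.2 i hi
      have hcomp : ∀ i, (D (a:M)) i = (D (a':M)) i ∧ (D (b:M)) i = (D (b':M)) i := by
        intro i
        have h := congrArg (fun g => g i) hD
        simp only [DirectSum.add_apply] at h
        by_cases hi : i ∈ J
        · refine ⟨(haJ i hi).trans (haJ' i hi).symm, ?_⟩
          rwa [haJ i hi, haJ' i hi, zero_add, zero_add] at h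
        · refine ⟨?_, (hbJ i hi).trans (hbJ' i hi).symm⟩
          rwa [hbJ i hi, hbJ' i hi, add_zero, add_zero] at h
      have ha : (a : M) = (a' : M) := by
        have : D (a : M) = D (a' : M) := DFinsupp.ext fun i => (hcomp i).1
        exact e.symm.injective this
      have hb : (b : M) = (b' : M) := by
        have : D (b : M) = D (b' : M) := DFinsupp.ext fun i => (hcomp i).2
        exact e.symm.injective this
      exact Prod.ext (Subtype.ext ha) (Subtype.ext hb)
    · -- surjectivity
      intro m
      have htop : K ⊔ (⨆ i ∈ J, T i) = ⊤ := by
        rw [hKeq, eq_top_iff, ← hint.submodule_iSup_eq_top]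
        refine iSup_le fun i => ?_
        by_cases hi : i ∈ J
        · exact le_sup_of_le_right (le_iSup₂ (f := fun i _ => T i) i hi)
        · exact le_sup_of_le_left (le_iSup₂ (f := fun i _ => T i) i (by simpa using hi))
      have : m ∈ K ⊔ (⨆ i ∈ J, T i) := htop ▸ Submodule.mem_top
      obtain ⟨a, ha, b, hb, hab⟩ := Submodule.mem_sup.mp this
      exact ⟨(⟨a, ha⟩, ⟨b, hb⟩), hab⟩
  · -- the linear equivalence
    set Φ : (⨁ i : ↥(Jᶜ), T i.1) →ₗ[S] K :=
      DirectSum.toModule S _ K (fun i => Submodule.inclusion ((hJc i.1).mp i.2)) with hΦ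
    have hΦval : ∀ x, ((Φ x : K) : M) = DirectSum.toModule S _ M (fun i : ↥(Jᶜ) => (T i.1).subtype) x := by
      intro x
      have : K.subtype ∘ₗ Φ = DirectSum.toModule S _ M (fun i : ↥(Jᶜ) => (T i.1).subtype) := by
        refine DirectSum.linearMap_ext _ fun i => ?_
        refine LinearMap.ext fun y => ?_
        simp only [LinearMap.comp_apply, hΦ]
        rw [DirectSum.toModule_lof, DirectSum.toModule_lof]
        rfl
      exact LinearMap.congr_fun this x
    set Ψ : (⨁ i : ↥(Jᶜ), T i.1) →ₗ[S] M := DirectSum.toModule S _ M (fun i : ↥(Jᶜ) => (T i.1).subtype) with hΨ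
    have hΨinj : Function.Injective Ψ := by
      -- Ψ = coeLinearMap T ∘ ext
      set ext : (⨁ i : ↥(Jᶜ), T i.1) →ₗ[S] ⨁ i, T i :=
        DirectSum.toModule S _ _ (fun i : ↥(Jᶜ) => DirectSum.lof S ι (fun j => T j) i.1) with hext
      have hfac : Ψ = (DirectSum.coeLinearMap T) ∘ₗ ext := by
        refine DirectSum.linearMap_ext _ fun i => ?_
        refine LinearMap.ext fun y => ?_
        simp only [LinearMap.comp_apply, hΨ, hext]
        rw [DirectSum.toModule_lof, DirectSum.toModule_lof,
          DirectSum.lof_eq_of, DirectSum.coeLinearMap_of]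
        rfl
      have hextinj : Function.Injective ext := by
        intro x y hxy
        refine DFinsupp.ext fun i => ?_
        have h1 : ∀ (z : ⨁ i : ↥(Jᶜ), T i.1),
            (ext z) i.1 = z i := by
          intro z
          have hc : (DirectSum.component S ι (fun j => T j) i.1) ∘ₗ ext
              = DirectSum.component S ↥(Jᶜ) (fun j : ↥(Jᶜ) => T j.1) i := by
            refine DirectSum.linearMap_ext _ fun j => ?_
            refine LinearMap.ext fun y => ?_
            simp only [LinearMap.comp_apply, hext]
            rw [DirectSum.toModule_lof]
            by_cases hij : j = i
            · subst hij; simp [DirectSum.component.lof_self]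
            · rw [DirectSum.component.of, DirectSum.component.of]
              have : (j.1 = i.1) ↔ (j = i) := Subtype.ext_iff.symm
              simp [hij, this]
          exact LinearMap.congr_fun hc z
        rw [← h1 x, ← h1 y, hxy]
      rw [hfac]
      exact hint.1.comp hextinj
    have hΦinj : Function.Injective Φ := by
      intro x y hxy
      apply hΨinj
      rw [← hΦval, ← hΦval, hxy]
    have hΦsurj : Function.Surjective Φ := by
      intro k
      have hrange : K ≤ LinearMap.range Ψ := by
        rw [hKeq]
        refine iSup₂_le fun i hi x hx => ?_
        exact ⟨DirectSum.lof S _ _ (⟨i, hi⟩ : ↥(Jᶜ)) ⟨x, hx⟩, by simp [hΨ, DirectSum.toModule_lof]⟩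
      obtain ⟨x, hx⟩ := hrange k.2
      exact ⟨x, Subtype.ext (by rw [hΦval]; exact hx)⟩
    exact ⟨(LinearEquiv.ofBijective Φ ⟨hΦinj, hΦsurj⟩).symm⟩
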